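/- Let μ > 0, let d ≥ 2 and 1 ≤ n < d, and let x ∈ ℝ^d. Define smax_μ(x) := μ·ln(Σ_{i=1}^d e^{x_i/μ}) and smax^{≤n}_μ(x) := μ·ln(Σ_{i=1}^n e^{x_i/μ}), and regard ∇smax^{≤n}_μ(x) as a vector in ℝ^d whose coordinates with index larger than n are zero. If δ := (1/μ)·(smax_μ(x) − smax^{≤n}_μ(x)) satisfies δ < 1, then ‖∇smax_μ(x) − ∇smax^{≤n}_μ(x)‖_1 ≤ 4δ. -/

import Mathlib

open Finset

/-- If the gap `δ = (1/μ)(smax_μ(x) − smax^{≤n}_μ(x))` between the softmax and the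
partial softmax is less than 1, then the ℓ₁ distance between their gradients is at
most `4δ` (where the gradient of the partial softmax is regarded as a vector in ℝ^d
with zero coordinates for indices larger than `n`). -/
theorem stmt18 {d : ℕ} (hd : 2 ≤ d) (μ : ℝ) (hμ : 0 < μ)
    (n : ℕ) (hn1 : 1 ≤ n) (hnd : n < d) (x : Fin d → ℝ) (δ : ℝ)
    (hδdef : δ = (1 / μ) *
      ((μ * Real.log (∑ i, Real.exp (x i / μ))) -
        (μ * Real.log (∑ i ∈ univ.filter (fun i : Fin d => (i : ℕ) < n),
          Real.exp (x i / μ)))))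
    (hδ : δ < 1) :
    ∑ i, |Real.exp (x i / μ) / (∑ j, Real.exp (x j / μ)) -
        (if (i : ℕ) < n then
          Real.exp (x i / μ) /
            (∑ j ∈ univ.filter (fun j : Fin d => (j : ℕ) < n), Real.exp (x j / μ))
        else 0)| ≤ 4 * δ := by
  set S : ℝ := ∑ i, Real.exp (x i / μ) with hSdef
  set T : ℝ := ∑ i ∈ univ.filter (fun i : Fin d => (i : ℕ) < n), Real.exp (x i / μ)
    with hTdef
  have hS : 0 < S := Finset.sum_pos (fun i _ => Real.exp_pos _) ⟨⟨0, by omega⟩, mem_univ _⟩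
  have hT : 0 < T := by
    refine Finset.sum_pos (fun i _ => Real.exp_pos _) ⟨⟨0, by omega⟩, ?_⟩
    simpa using (show 0 < n by omega)
  have hTS : T ≤ S :=
    Finset.sum_le_sum_of_subset_of_nonneg (filter_subset _ _)
      (fun i _ _ => (Real.exp_pos _).le)
  have hδ' : δ = Real.log S - Real.log T := by
    rw [hδdef]; field_simp
  have hδ0 : 0 ≤ δ := by
    rw [hδ']
    exact sub_nonneg.2 (Real.log_le_log hT hTS)
  have hexp : Real.exp (-δ) = T / S := by
    rw [hδ', neg_sub, Real.exp_sub, Real.exp_log hS, Real.exp_log hT]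
  have hsum : ∑ i, |Real.exp (x i / μ) / S -
      (if (i : ℕ) < n then Real.exp (x i / μ) / T else 0)| = 2 - 2 * (T / S) := by
    rw [← Finset.sum_filter_add_sum_filter_not univ (fun i : Fin d => (i : ℕ) < n)]
    have h1 : ∑ i ∈ univ.filter (fun i : Fin d => (i : ℕ) < n),
        |Real.exp (x i / μ) / S -
          (if (i : ℕ) < n then Real.exp (x i / μ) / T else 0)| =
        ∑ i ∈ univ.filter (fun i : Fin d => (i : ℕ) < n),
          (Real.exp (x i / μ) / T - Real.exp (x i / μ) / S) := by
      refine Finset.sum_congr rfl fun i hi => ?_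
      rw [mem_filter] at hi
      rw [if_pos hi.2, abs_of_nonpos, neg_sub]
      have := (Real.exp_pos (x i / μ)).le
      have := div_le_div_of_nonneg_left this hT hTS
      linarith
    have h2 : ∑ i ∈ univ.filter (fun i : Fin d => ¬ (i : ℕ) < n),
        |Real.exp (x i / μ) / S -
          (if (i : ℕ) < n then Real.exp (x i / μ) / T else 0)| =
        ∑ i ∈ univ.filter (fun i : Fin d => ¬ (i : ℕ) < n),
          Real.exp (x i / μ) / S := by
      refine Finset.sum_congr rfl fun i hi => ?_
      rw [mem_filter] at hi
      rw [if_neg hi.2, sub_zero, abs_of_nonneg (by positivity)]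
    rw [h1, h2, Finset.sum_sub_distrib, ← Finset.sum_div, ← Finset.sum_div,
      ← Finset.sum_div, ← hTdef]
    have h3 : ∑ i ∈ univ.filter (fun i : Fin d => ¬ (i : ℕ) < n),
        Real.exp (x i / μ) = S - T := by
      have := Finset.sum_filter_add_sum_filter_not univ (fun i : Fin d => (i : ℕ) < n)
        (fun i => Real.exp (x i / μ))
      rw [← hTdef, ← hSdef] at this
      linarith
    rw [h3]
    field_simp
    ring
  rw [hsum]
  have key := Real.add_one_le_exp (-δ)
  rw [hexp] at key
  linarith
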